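/- Let λ > 0 and let F_λ : ℝ → ℝ be the continuous function with F_λ(0) = 0 such that for all θ ∈ ℝ there exists c(θ) > 0 with (cos θ, λ·sin θ) = c(θ)·(cos F_λ(θ), sin F_λ(θ)) (so tan F_λ(θ) = λ·tan θ wherever cos θ ≠ 0; F_λ is the angle, with respect to the metric g_λ = dx² + λ²dy², of the radial vector field X(x,y) = (x,y) at the point (cos θ, sin θ)). Then: (i) F_λ is differentiable with F_λ′(0) = λ; and (ii) if 0 < λ < 2, then θ = 0 is the unique θ ∈ (−π, π] satisfying F_λ(θ) ≡ 2θ (mod 2π). -/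

import Mathlib

open Real

/-- for the metric `g_λ = dx² + λ²dy²`, the angle lift `F_λ` of the
radial vector field satisfies `F_λ′(0) = λ`, and for `0 < λ < 2` the only
`θ ∈ (−π, π]` with `F_λ(θ) ≡ 2θ (mod 2π)` is `θ = 0`. -/
theorem lemon_monstar_bifurcation (lam : ℝ) (hlam : 0 < lam)
    (F : ℝ → ℝ) (hFcont : Continuous F) (hF0 : F 0 = 0)
    (hlift : ∀ θ : ℝ, ∃ c > 0,
      cos θ = c * cos (F θ) ∧ lam * sin θ = c * sin (F θ)) :
    Differentiable ℝ F ∧ deriv F 0 = lam ∧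
    (lam < 2 → ∃! θ : ℝ, θ ∈ Set.Ioc (-π) π ∧
      ∃ k : ℤ, F θ = 2 * θ + 2 * π * k) := by
  have hπ := Real.pi_pos
  -- the complex curve
  set z : ℝ → ℂ := fun θ => (Real.cos θ : ℂ) + (lam * Real.sin θ : ℝ) * Complex.I with hz
  have hzval : ∀ θ, ∃ c : ℝ, 0 < c ∧ z θ = (c : ℂ) * Complex.exp ((F θ : ℂ) * Complex.I) := by
    intro θ
    obtain ⟨c, hc, h1, h2⟩ := hlift θ
    refine ⟨c, hc, ?_⟩
    rw [Complex.exp_mul_I]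
    simp only [hz, ← Complex.ofReal_cos, ← Complex.ofReal_sin]
    push_cast [h1, h2]
    ring
  have hzdiff : Differentiable ℝ z := by
    apply Differentiable.add
    · exact Complex.ofRealCLM.differentiable.comp Real.differentiable_cos
    · exact (Complex.ofRealCLM.differentiable.comp
        (Real.differentiable_sin.const_mul lam)).mul (differentiable_const _)
  -- differentiability of F
  have hdiff : Differentiable ℝ F := by
    intro θ₀
    obtain ⟨c₀, hc₀, hzv₀⟩ := hzval θ₀
    set a := F θ₀ with ha
    set h : ℝ → ℂ := fun θ => z θ * Complex.exp (-(a : ℂ) * Complex.I) with hh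
    have hval : h θ₀ = (c₀ : ℂ) := by
      simp only [hh, hzv₀, ← ha]
      rw [mul_assoc, ← Complex.exp_add,
        show (a : ℂ) * Complex.I + -(a : ℂ) * Complex.I = 0 by ring,
        Complex.exp_zero, mul_one]
    have hhd : DifferentiableAt ℝ h θ₀ := (hzdiff θ₀).mul_const _
    have hmem : h θ₀ ∈ Complex.slitPlane := by
      rw [hval]; exact Complex.ofReal_mem_slitPlane.2 hc₀
    have hargd : DifferentiableAt ℝ (fun θ => a + Complex.arg (h θ)) θ₀ := by
      have hlog : DifferentiableAt ℝ Complex.log (h θ₀) :=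
        (Complex.differentiableAt_log hmem).restrictScalars ℝ
      have him : DifferentiableAt ℝ (fun θ => (Complex.log (h θ)).im) θ₀ :=
        DifferentiableAt.comp θ₀ Complex.imCLM.differentiable.differentiableAt
          (hlog.comp θ₀ hhd)
      have heq : (fun θ => a + Complex.arg (h θ))
          = fun θ => a + (Complex.log (h θ)).im := by
        funext θ; rw [Complex.log_im]
      rw [heq]
      exact (differentiableAt_const a).add him
    have hev : (fun θ => a + Complex.arg (h θ)) =ᶠ[nhds θ₀] F := by
      have habs : ∀ᶠ θ in nhds θ₀, |F θ - a| < π := by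
        have hct : ContinuousAt (fun θ => |F θ - a|) θ₀ :=
          ((hFcont.sub continuous_const).abs).continuousAt
        exact hct.eventually_lt continuousAt_const (by simp [← ha, hπ])
      filter_upwards [habs] with θ hθ
      obtain ⟨c, hc, hzv⟩ := hzval θ
      have hzz : h θ = (c : ℂ) * Complex.exp (((F θ - a : ℝ) : ℂ) * Complex.I) := by
        simp only [hh, hzv]
        rw [mul_assoc, ← Complex.exp_add]
        congr 1
        push_cast
        ring_nf
      rw [hzz, Complex.arg_real_mul _ hc, Complex.exp_mul_I,
        Complex.arg_cos_add_sin_mul_I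
          ⟨by linarith [(abs_lt.1 hθ).1], le_of_lt (abs_lt.1 hθ).2⟩]
      ring
    exact hargd.congr_of_eventuallyEq hev.symm
  have htanrel : ∀ θ : ℝ, Real.cos θ ≠ 0 → Real.tan (F θ) = lam * Real.tan θ := by
    intro θ hcθ
    obtain ⟨c, hc, e1, e2⟩ := hlift θ
    rw [Real.tan_eq_sin_div_cos, Real.tan_eq_sin_div_cos,
      show Real.sin (F θ) = lam * Real.sin θ / c by rw [eq_div_iff hc.ne']; linarith,
      show Real.cos (F θ) = Real.cos θ / c by rw [eq_div_iff hc.ne']; linarith]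
    field_simp
  refine ⟨hdiff, ?_, ?_⟩
  · -- deriv F 0 = lam
    have hev : F =ᶠ[nhds 0] fun θ => Real.arctan (lam * Real.tan θ) := by
      have h2 : ∀ᶠ θ in nhds (0:ℝ), |F θ| < π / 2 := by
        have hct : ContinuousAt (fun θ => |F θ|) 0 := (hFcont.abs).continuousAt
        exact hct.eventually_lt continuousAt_const (by simp [hF0]; positivity)
      filter_upwards [h2] with θ hFθ
      obtain ⟨c, hc, e1, e2⟩ := hlift θ
      have hFlt := abs_lt.1 hFθ
      have hFlt1 : -(π/2) < F θ := by linarith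
      have hcosF : 0 < Real.cos (F θ) :=
        Real.cos_pos_of_mem_Ioo ⟨hFlt1, hFlt.2⟩
      have hcosθ : Real.cos θ ≠ 0 := by
        intro h0
        rw [h0] at e1
        nlinarith
      rw [← htanrel θ hcosθ, Real.arctan_tan hFlt1 hFlt.2]
    have hder : HasDerivAt (fun θ => Real.arctan (lam * Real.tan θ)) lam 0 := by
      have ht : HasDerivAt Real.tan 1 0 := by
        simpa using Real.hasDerivAt_tan (by simp : Real.cos 0 ≠ 0)
      have ht2 : HasDerivAt (fun θ => lam * Real.tan θ) lam 0 := by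
        simpa using ht.const_mul lam
      have har : HasDerivAt Real.arctan 1 (lam * Real.tan 0) := by
        simpa using Real.hasDerivAt_arctan (lam * Real.tan 0)
      simpa [Function.comp_def] using har.comp 0 ht2
    exact (hder.congr_of_eventuallyEq hev).deriv
  · -- uniqueness for lam < 2
    intro hlam2
    -- global fact: 0 < cos (F t - t)
    have hcospos : ∀ t : ℝ, 0 < Real.cos (F t - t) := by
      intro t
      obtain ⟨c, hc, e1, e2⟩ := hlift t
      have key : c * Real.cos (F t - t) = Real.cos t ^ 2 + lam * Real.sin t ^ 2 := by
        rw [Real.cos_sub]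
        linear_combination (-(Real.cos t)) * e1 - Real.sin t * e2
      have hpos : 0 < Real.cos t ^ 2 + lam * Real.sin t ^ 2 := by
        nlinarith [Real.sin_sq_add_cos_sq t, sq_nonneg (Real.sin t),
          sq_nonneg (Real.cos t)]
      nlinarith
    -- global band: F t - t ∈ (-π/2, π/2)
    have hband : ∀ t : ℝ, F t - t ∈ Set.Ioo (-(π/2)) (π/2) := by
      intro t
      set g : ℝ → ℝ := fun s => F s - s with hg
      have hgc : Continuous g := hFcont.sub continuous_id
      have hg0 : g 0 = 0 := by simp [hg, hF0]
      by_contra hcon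
      rw [Set.mem_Ioo, not_and_or] at hcon
      rcases hcon with hle | hge
      · push_neg at hle
        have hm : -(π/2) ∈ Set.uIcc (g 0) (g t) := by
          rw [hg0, Set.mem_uIcc]
          right
          constructor <;> linarith
        obtain ⟨s, _, hs⟩ := intermediate_value_uIcc hgc.continuousOn hm
        have := hcospos s
        rw [show F s - s = g s from rfl, hs] at this
        simp at this
      · push_neg at hge
        have hm : π/2 ∈ Set.uIcc (g 0) (g t) := by
          rw [hg0, Set.mem_uIcc]
          left
          constructor <;> linarith
        obtain ⟨s, _, hs⟩ := intermediate_value_uIcc hgc.continuousOn hm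
        have := hcospos s
        rw [show F s - s = g s from rfl, hs] at this
        simp at this
    refine ⟨0, ⟨⟨by linarith, hπ.le⟩, 0, by simp [hF0]⟩, ?_⟩
    rintro θ ⟨⟨hθ1, hθ2⟩, k, hk⟩
    have hb := hband θ
    rw [hk] at hb
    obtain ⟨hb1, hb2⟩ := hb
    -- k = 0
    have hk0 : k = 0 := by
      have h1 : (-1 : ℝ) < (k : ℝ) := by nlinarith
      have h2 : ((k : ℝ) : ℝ) < 1 := by nlinarith
      have h1' : (-1 : ℤ) < k := by exact_mod_cast h1
      have h2' : k < (1 : ℤ) := by exact_mod_cast h2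
      omega
    rw [hk0] at hk hb1 hb2
    push_cast at hk hb1 hb2
    have hkk : F θ = 2 * θ := by linarith
    have hθio : θ ∈ Set.Ioo (-(π/2)) (π/2) := ⟨by linarith, by linarith⟩
    have hcosθ : 0 < Real.cos θ := Real.cos_pos_of_mem_Ioo hθio
    obtain ⟨c, hc, e1, e2⟩ := hlift θ
    have hcosF : 0 < Real.cos (F θ) := by nlinarith
    rw [hkk] at hcosF
    -- 2θ ∈ (-π/2, π/2)
    have h2θ : 2 * θ ∈ Set.Ioo (-(π/2)) (π/2) := by
      constructor
      · by_contra hcc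
        push_neg at hcc
        have : Real.cos (2 * θ) ≤ 0 := by
          rw [show (2:ℝ) * θ = -(-(2*θ)) by ring, Real.cos_neg]
          apply Real.cos_nonpos_of_pi_div_two_le_of_le <;> linarith
        linarith
      · by_contra hcc
        push_neg at hcc
        have : Real.cos (2 * θ) ≤ 0 := by
          apply Real.cos_nonpos_of_pi_div_two_le_of_le <;> linarith
        linarith
    have hθ4a : -(π/4) < θ := by linarith [h2θ.1]
    have hθ4b : θ < π/4 := by linarith [h2θ.2]
    -- tan equation
    have htanF : Real.tan (F θ) = lam * Real.tan θ := htanrel θ hcosθ.ne'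
    rw [hkk, Real.tan_two_mul] at htanF
    set t := Real.tan θ with hts
    have hπ4 : (π/4 : ℝ) ∈ Set.Ioo (-(π/2)) (π/2) := ⟨by linarith, by linarith⟩
    have hπ4' : (-(π/4) : ℝ) ∈ Set.Ioo (-(π/2)) (π/2) := ⟨by linarith, by linarith⟩
    have ht1 : t < 1 := by
      have := Real.strictMonoOn_tan hθio hπ4 hθ4b
      rwa [Real.tan_pi_div_four] at this
    have ht2 : -1 < t := by
      have := Real.strictMonoOn_tan hπ4' hθio hθ4a
      rwa [show Real.tan (-(π/4)) = -1 by
        rw [Real.tan_neg, Real.tan_pi_div_four]] at this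
    have htsq : t ^ 2 < 1 := by nlinarith
    have hne : (1 : ℝ) - t ^ 2 ≠ 0 := by nlinarith
    have heq : 2 * t = lam * t * (1 - t ^ 2) := by
      field_simp at htanF
      linarith [htanF]
    have ht0 : t = 0 := by
      by_contra htne
      have h2eq : 2 = lam * (1 - t ^ 2) :=
        mul_left_cancel₀ htne (by linear_combination heq)
      nlinarith [sq_nonneg t]
    have : Real.tan θ = Real.tan 0 := by rw [Real.tan_zero]; exact ht0
    exact Real.injOn_tan hθio ⟨by linarith, by linarith⟩ this
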